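/- arXiv:2108.09785 — 4 statements merged into one kernel-verified Lean document; each statement's English description precedes it below -/
import Mathlib

section
/- Under the substitution x = v/(1+3v+v²), the power series P(x) = (1+x-√(1-6x+5x²))/2 satisfies P = v(v+2)/(1+3v+v²), and √(1-6x+5x²) = (1-v²)/(1+3v+v²). -/
open PowerSeries

/-- Under the substitution `x = v/(1+3v+v²)` (as formal power series in `v`),
the series `P = (1+x-√(1-6x+5x²))/2` satisfies `P = v(v+2)/(1+3v+v²)` and
`√(1-6x+5x²) = (1-v²)/(1+3v+v²)`, where the square root `W` is the unique
power series with `W² = 1-6x+5x²` and constant term 1. -/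
theorem substitution_identity (x W P : PowerSeries ℚ)
    (hx : x * (1 + 3 * X + X ^ 2) = X)
    (hW : W ^ 2 = 1 - 6 * x + 5 * x ^ 2)
    (hW0 : PowerSeries.coeff 0 W = 1)
    (hP : 2 * P = 1 + x - W) :
    P * (1 + 3 * X + X ^ 2) = X * (X + 2) ∧
    W * (1 + 3 * X + X ^ 2) = 1 - X ^ 2 := by
  have key : (W * (1 + 3 * X + X ^ 2) - (1 - X ^ 2)) *
      (W * (1 + 3 * X + X ^ 2) + (1 - X ^ 2)) = 0 := by
    linear_combination (1 + 3 * X + X ^ 2) ^ 2 * hW +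
      (5 * (x * (1 + 3 * X + X ^ 2) + X) - 6 * (1 + 3 * X + X ^ 2)) * hx
  have hWu : W * (1 + 3 * X + X ^ 2) = 1 - X ^ 2 := by
    rcases mul_eq_zero.mp key with h | h
    · exact sub_eq_zero.mp h
    · exfalso
      have c := congrArg (PowerSeries.constantCoeff (R := ℚ)) h
      simp only [map_add, map_mul, map_sub, map_one, map_pow, map_ofNat,
        constantCoeff_X, map_zero] at c
      rw [coeff_zero_eq_constantCoeff] at hW0
      rw [hW0] at c
      norm_num at c
  have h2 : 2 * (P * (1 + 3 * X + X ^ 2)) = 2 * (X * (X + 2)) := by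
    linear_combination (1 + 3 * X + X ^ 2) * hP + hx - hWu
  have h2ne : (2 : PowerSeries ℚ) ≠ 0 := by
    intro h
    have c := congrArg (PowerSeries.constantCoeff (R := ℚ)) h
    simp only [map_ofNat, map_zero] at c
    norm_num at c
  exact ⟨mul_left_cancel₀ h2ne h2, hWu⟩
end

section
/- The generating function S(0) = (1 - wx - √(1-(4+2w)x+(4w+w²)x²))/(2x), counting skew Dyck paths of semilength n by number of red (south-west) edges (marked by w), has expansion 1 + x + (w+2)x² + (w²+4w+5)x³ + (w³+6w²+15w+14)x⁴ + O(x⁵). -/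
open PowerSeries

lemma half_cancel {a b : Polynomial ℚ} (h : 2 * a = 2 * b) : a = b :=
  mul_left_cancel₀ two_ne_zero h

set_option maxHeartbeats 2000000 in
/-- In `ℚ[w][[x]]`, let `w` denote the constant series `w` and let `W` be the
power-series square root (constant term 1) of `1-(4+2w)x+(4w+w²)x²`.  The
red-edge-counting generating function `S(0)`, defined by
`2x·S(0) = 1 - wx - W`, has expansion
`1 + x + (w+2)x² + (w²+4w+5)x³ + (w³+6w²+15w+14)x⁴ + O(x⁵)`. -/
theorem redEdge_genFun_expansion
    (W S : PowerSeries (Polynomial ℚ))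
    (w : PowerSeries (Polynomial ℚ))
    (hw : w = PowerSeries.C Polynomial.X)
    (hW : W ^ 2 = 1 - (4 + 2 * w) * PowerSeries.X
        + (4 * w + w ^ 2) * PowerSeries.X ^ 2)
    (hW0 : PowerSeries.coeff 0 W = 1)
    (hS : 2 * PowerSeries.X * S = 1 - w * PowerSeries.X - W) :
    PowerSeries.coeff 0 S = 1 ∧
    PowerSeries.coeff 1 S = 1 ∧
    PowerSeries.coeff 2 S = Polynomial.X + 2 ∧
    PowerSeries.coeff 3 S
      = Polynomial.X ^ 2 + 4 * Polynomial.X + 5 ∧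
    PowerSeries.coeff 4 S
      = Polynomial.X ^ 3 + 6 * Polynomial.X ^ 2 + 15 * Polynomial.X + 14 := by
  subst hw
  have key := fun n : ℕ => congrArg (PowerSeries.coeff n) hW
  have keyS := fun n : ℕ => congrArg (PowerSeries.coeff n) hS
  have h2 : (2 : PowerSeries (Polynomial ℚ)) = PowerSeries.C 2 :=
    (map_ofNat _ 2).symm
  have h4 : (4 : PowerSeries (Polynomial ℚ)) = PowerSeries.C 4 :=
    (map_ofNat _ 4).symm
  have e1 := key 1
  have e2 := key 2
  have e3 := key 3
  have e4 := key 4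
  have e5 := key 5
  have f1 := keyS 1
  have f2 := keyS 2
  have f3 := keyS 3
  have f4 := keyS 4
  have f5 := keyS 5
  simp [pow_two, PowerSeries.coeff_mul, Finset.Nat.sum_antidiagonal_eq_sum_range_succ_mk,
    Finset.sum_range_succ, hW0, h2, h4, PowerSeries.coeff_C, PowerSeries.coeff_X]
    at e1 e2 e3 e4 e5 f1 f2 f3 f4 f5
  have hA1 : PowerSeries.coeff 1 W = -(2 + Polynomial.X) := half_cancel (by linear_combination e1)
  rw [hA1] at e2 e3 e4 e5
  have hA2 : PowerSeries.coeff 2 W = -2 := half_cancel (by linear_combination e2)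
  rw [hA2] at e3 e4 e5
  have hA3 : PowerSeries.coeff 3 W = -(4 + 2 * Polynomial.X) := half_cancel (by linear_combination e3)
  rw [hA3] at e4 e5
  have hA4 : PowerSeries.coeff 4 W
      = -(2 * Polynomial.X ^ 2 + 8 * Polynomial.X + 10) := half_cancel (by linear_combination e4)
  rw [hA4] at e5
  have hA5 : PowerSeries.coeff 5 W
      = -(2 * Polynomial.X ^ 3 + 12 * Polynomial.X ^ 2 + 30 * Polynomial.X + 28) := half_cancel (by linear_combination e5)
  rw [hA1] at f1
  rw [hA2] at f2
  rw [hA3] at f3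
  rw [hA4] at f4
  rw [hA5] at f5
  exact ⟨half_cancel (by rw [PowerSeries.coeff_zero_eq_constantCoeff]; linear_combination f1), half_cancel (by linear_combination f2),
    half_cancel (by linear_combination f3), half_cancel (by linear_combination f4),
    half_cancel (by linear_combination f5)⟩
end

section
/- Under the substitution z = v/(1+(2+w)v+v²), the series S(0) = (1 - wz - √(1-(4+2w)z+(4w+w²)z²))/(2z) (with z in place of z² i.e. x = z) equals 1 + v. -/
open PowerSeries

/-- In `ℚ[w][[v]]`, under the substitution `x = v/(1+(2+w)v+v²)`, the series
`S(0) = (1 - wx - √(1-(4+2w)x+(4w+w²)x²))/(2x)` equals `1 + v`. Here the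
square root `W` is the power series with `W² = 1-(4+2w)x+(4w+w²)x²` and
constant term 1, and `S` is defined by `2x·S = 1 - wx - W`. -/
theorem redEdge_substitution
    (x W S : PowerSeries (Polynomial ℚ))
    (w : PowerSeries (Polynomial ℚ))
    (hw : w = PowerSeries.C (Polynomial.X : Polynomial ℚ))
    (hx : x * (1 + (2 + w) * PowerSeries.X + PowerSeries.X ^ 2) = PowerSeries.X)
    (hW : W ^ 2 = 1 - (4 + 2 * w) * x + (4 * w + w ^ 2) * x ^ 2)
    (hW0 : PowerSeries.coeff 0 W = 1)
    (hS : 2 * x * S = 1 - w * x - W) :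
    S = 1 + PowerSeries.X := by
  set W' : PowerSeries (Polynomial ℚ) := 1 - w * x - 2 * x * (1 + PowerSeries.X) with hW'
  have hW'sq : W' ^ 2 = 1 - (4 + 2 * w) * x + (4 * w + w ^ 2) * x ^ 2 := by
    rw [hW']
    linear_combination (4 * x) * hx
  have hx0 : constantCoeff x = 0 := by
    have h := congrArg (constantCoeff) hx
    simpa using h
  have hW'0 : constantCoeff W' = 1 := by
    simp [hW', hx0]
  have hWW' : W = W' := by
    have h : (W - W') * (W + W') = 0 := by
      linear_combination hW - hW'sq
    rcases mul_eq_zero.mp h with h1 | h2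
    · exact sub_eq_zero.mp h1
    · exfalso
      have h0 := congrArg (constantCoeff) h2
      rw [map_add, hW'0] at h0
      have hW0' : constantCoeff W = 1 := by simpa using hW0
      rw [hW0'] at h0
      norm_num at h0
  have hx_ne : x ≠ 0 := by
    intro h
    rw [h, zero_mul] at hx
    exact PowerSeries.X_ne_zero hx.symm
  have h2 : (2 : PowerSeries (Polynomial ℚ)) * x * (S - (1 + PowerSeries.X)) = 0 := by
    rw [hWW'] at hS
    linear_combination hS
  rcases mul_eq_zero.mp h2 with h3 | h4
  · rcases mul_eq_zero.mp h3 with h5 | h6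
    · exfalso
      have := congrArg (constantCoeff) h5
      rw [map_ofNat] at this
      exact OfNat.ofNat_ne_zero 2 this
    · exact absurd h6 hx_ne
  · exact sub_eq_zero.mp h4
end

section
/- The coefficient of w² in S(0) = (1 - wx - √(1-(4+2w)x+(4w+w²)x²))/(2x) equals x³/(1-4x)^{3/2}. -/
open PowerSeries

noncomputable def phi (k : ℕ) (F : PowerSeries (Polynomial ℚ)) : PowerSeries ℚ :=
  PowerSeries.mk fun n => (PowerSeries.coeff n F).coeff k

@[simp] lemma coeff_phi (k n : ℕ) (F : PowerSeries (Polynomial ℚ)) :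
    PowerSeries.coeff (R := ℚ) n (phi k F) = (PowerSeries.coeff n F).coeff k := by
  simp [phi]

lemma phi_mul0 (F G : PowerSeries (Polynomial ℚ)) :
    phi 0 (F * G) = phi 0 F * phi 0 G := by
  ext n
  simp [PowerSeries.coeff_mul, Polynomial.finset_sum_coeff, Polynomial.mul_coeff_zero]

lemma phi_mul1 (F G : PowerSeries (Polynomial ℚ)) :
    phi 1 (F * G) = phi 0 F * phi 1 G + phi 1 F * phi 0 G := by
  ext n
  simp only [coeff_phi, PowerSeries.coeff_mul, map_add, Polynomial.finset_sum_coeff,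
    Polynomial.coeff_mul]
  rw [← Finset.sum_add_distrib]
  refine Finset.sum_congr rfl fun p _ => ?_
  rw [Finset.Nat.sum_antidiagonal_eq_sum_range_succ_mk]
  simp [Finset.sum_range_succ]

lemma phi_mul2 (F G : PowerSeries (Polynomial ℚ)) :
    phi 2 (F * G) = phi 0 F * phi 2 G + phi 1 F * phi 1 G + phi 2 F * phi 0 G := by
  ext n
  simp only [coeff_phi, PowerSeries.coeff_mul, map_add, Polynomial.finset_sum_coeff,
    Polynomial.coeff_mul]
  rw [← Finset.sum_add_distrib, ← Finset.sum_add_distrib]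
  refine Finset.sum_congr rfl fun p _ => ?_
  rw [Finset.Nat.sum_antidiagonal_eq_sum_range_succ_mk]
  simp [Finset.sum_range_succ]

lemma phi_sub (k : ℕ) (F G : PowerSeries (Polynomial ℚ)) :
    phi k (F - G) = phi k F - phi k G := by
  ext n; simp

lemma phi_spec (k : ℕ) (p q : Polynomial ℚ) :
    phi k (1 - PowerSeries.C (R := Polynomial ℚ) p * X + PowerSeries.C (R := Polynomial ℚ) q * X ^ 2)
      = PowerSeries.C (R := ℚ) ((1 : Polynomial ℚ).coeff k)
        - PowerSeries.C (R := ℚ) (p.coeff k) * X + PowerSeries.C (R := ℚ) (q.coeff k) * X ^ 2 := by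
  ext n
  simp only [coeff_phi, map_sub, map_add, PowerSeries.coeff_C_mul, PowerSeries.coeff_one,
    PowerSeries.coeff_X, PowerSeries.coeff_X_pow, PowerSeries.coeff_C, mul_ite, mul_one, mul_zero]
  split_ifs <;> simp_all [Polynomial.coeff_one]

lemma two_X_eq : (2 * X : PowerSeries (Polynomial ℚ)) = PowerSeries.C (R := Polynomial ℚ) 2 * X := by
  rw [map_ofNat]

lemma phi_twoX0 : phi 0 (2 * X : PowerSeries (Polynomial ℚ)) = 2 * X := by
  have hB : (2 * X : PowerSeries ℚ) = PowerSeries.C (R := ℚ) 2 * X := by rw [map_ofNat]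
  ext n
  rw [coeff_phi, hB, two_X_eq, PowerSeries.coeff_C_mul, PowerSeries.coeff_C_mul,
    PowerSeries.coeff_X]
  have h2 : (2 : Polynomial ℚ) = Polynomial.C 2 := by rw [map_ofNat]
  split_ifs <;> simp_all [h2, PowerSeries.coeff_X]

lemma phi_twoX (k : ℕ) (hk : k ≠ 0) : phi k (2 * X : PowerSeries (Polynomial ℚ)) = 0 := by
  ext n
  rw [coeff_phi, two_X_eq, PowerSeries.coeff_C_mul, PowerSeries.coeff_X]
  have h2 : (2 : Polynomial ℚ) = Polynomial.C 2 := by rw [map_ofNat]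
  split_ifs <;> simp [h2, Polynomial.coeff_C, hk]

/-- The coefficient of `w²` in `S(0) = (1 - wx - √(1-(4+2w)x+(4w+w²)x²))/(2x)`
equals `x³/(1-4x)^{3/2}`, i.e. the series `T` with coefficients
`[wⁿ²]` satisfies `T·(√(1-4x))³ = x³`. -/
theorem redEdge_w2
    (W S : PowerSeries (Polynomial ℚ))
    (w : PowerSeries (Polynomial ℚ))
    (hw : w = PowerSeries.C (R := Polynomial ℚ) Polynomial.X)
    (hW : W ^ 2 = 1 - (4 + 2 * w) * PowerSeries.X
        + (4 * w + w ^ 2) * PowerSeries.X ^ 2)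
    (hW0 : PowerSeries.coeff (R := Polynomial ℚ) 0 W = 1)
    (hS : 2 * PowerSeries.X * S = 1 - w * PowerSeries.X - W)
    (T : PowerSeries ℚ)
    (hT : ∀ n : ℕ, (PowerSeries.coeff (R := Polynomial ℚ) n S).coeff 2
        = PowerSeries.coeff (R := ℚ) n T)
    (V : PowerSeries ℚ)
    (hV : V ^ 2 = 1 - 4 * PowerSeries.X)
    (hV0 : PowerSeries.coeff (R := ℚ) 0 V = 1) :
    T * V ^ 3 = PowerSeries.X ^ 3 := by
  subst hw
  set A := phi 0 W with hA
  set B := phi 1 W with hB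
  set C := phi 2 W with hC
  have hp : (4 + 2 * PowerSeries.C (R := Polynomial ℚ) Polynomial.X)
      = PowerSeries.C (R := Polynomial ℚ) (4 + 2 * Polynomial.X) := by
    simp [map_add, map_mul, map_ofNat]
  have hq : (4 * PowerSeries.C (R := Polynomial ℚ) Polynomial.X
        + (PowerSeries.C (R := Polynomial ℚ) Polynomial.X) ^ 2)
      = PowerSeries.C (R := Polynomial ℚ) (4 * Polynomial.X + Polynomial.X ^ 2) := by
    simp [map_add, map_mul, map_pow, map_ofNat]
  rw [hp, hq] at hW
  have hWW : W ^ 2 = W * W := sq W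
  have e0 : A * A = 1 - 4 * X := by
    have h := congrArg (phi 0) hW
    rw [hWW, phi_mul0, phi_spec, ← hA] at h
    norm_num [Polynomial.coeff_one, Polynomial.coeff_X, map_ofNat] at h
    linear_combination h
  have e1 : A * B + B * A = -2 * X + 4 * X ^ 2 := by
    have h := congrArg (phi 1) hW
    rw [hWW, phi_mul1, phi_spec, ← hA, ← hB] at h
    norm_num [Polynomial.coeff_one, Polynomial.coeff_X, map_ofNat] at h
    linear_combination h
  have e2 : A * C + B * B + C * A = X ^ 2 := by
    have h := congrArg (phi 2) hW
    rw [hWW, phi_mul2, phi_spec, ← hA, ← hB, ← hC] at h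
    norm_num [Polynomial.coeff_one, Polynomial.coeff_X, map_ofNat] at h
    linear_combination h
  have hA0 : PowerSeries.coeff (R := ℚ) 0 A = 1 := by
    rw [hA, coeff_phi, hW0]; simp
  have hAV : A = V := by
    have hsq : A ^ 2 = V ^ 2 := by rw [hV, sq, e0]
    have hne : A + V ≠ 0 := fun h => by
      have h0 := congrArg (PowerSeries.coeff (R := ℚ) 0) h
      rw [map_add, hA0, hV0] at h0
      norm_num at h0
    have hz : (A - V) * (A + V) = 0 := by linear_combination hsq
    rcases mul_eq_zero.mp hz with h | h
    · exact sub_eq_zero.mp h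
    · exact absurd h hne
  have hT' : T = phi 2 S := by
    ext n; rw [coeff_phi, hT]
  have hS2 : 2 * X * T = -C := by
    have h := congrArg (phi 2) hS
    rw [phi_mul2, phi_twoX0, phi_twoX 1 one_ne_zero, phi_twoX 2 two_ne_zero,
      phi_sub, phi_sub] at h
    have h1 : phi 2 (1 : PowerSeries (Polynomial ℚ)) = 0 := by
      ext n
      rw [coeff_phi, PowerSeries.coeff_one]
      split_ifs <;> simp [Polynomial.coeff_one]
    have h2 : phi 2 (PowerSeries.C (R := Polynomial ℚ) Polynomial.X * X) = 0 := by
      ext n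
      rw [coeff_phi, PowerSeries.coeff_C_mul, PowerSeries.coeff_X]
      split_ifs <;> simp [Polynomial.coeff_X]
    rw [h1, h2, ← hC] at h
    rw [hT']
    linear_combination h
  rw [← hAV] at hV ⊢
  have h4 : (2 * X * T) * A ^ 3 = -C * A ^ 3 := by rw [hS2]
  have key : (8 * X : PowerSeries ℚ) * (T * A ^ 3) = (8 * X) * X ^ 3 := by
    linear_combination 4 * h4 - 2 * A ^ 2 * e2 + (A * B - X + 2 * X ^ 2) * e1
      - 2 * X ^ 2 * e0
  have h8X : (8 * X : PowerSeries ℚ) ≠ 0 := by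
    refine mul_ne_zero ?_ PowerSeries.X_ne_zero
    intro h
    have h0 := congrArg (PowerSeries.constantCoeff (R := ℚ)) h
    simp [map_ofNat] at h0
  exact mul_left_cancel₀ h8X key
end
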